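/- Let R be a commutative ring with unity and f ∈ R[X] a polynomial such that the image f(R) = {f(r) : r ∈ R} is finite and, for every maximal ideal 𝔪 of R, the function induced by f on R/𝔪 is non-constant (i.e., there exist a, b ∈ R with f(a) − f(b) ∉ 𝔪). Then R is zero dimensional (every prime ideal of R is maximal) and for every prime ideal 𝔭 of R the quotient R/𝔭 is finite; in particular every residue field of R is finite. -/
import Mathlib

lemma aux_finite {R : Type*} [CommRing R] [Nontrivial R] (f : Polynomial R)
    (hfin : (Set.range fun r => f.eval r).Finite)
    (hnc : ∀ 𝔪 : Ideal R, 𝔪.IsMaximal → ∃ a b : R, f.eval a - f.eval b ∉ 𝔪)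
    (P : Ideal R) (hP : P.IsPrime) : Finite (R ⧸ P) := by
  by_contra hinf
  rw [not_finite_iff_infinite] at hinf
  set mk := Ideal.Quotient.mk P with hmk
  set g := f.map mk with hg
  have hgeval : ∀ r : R, g.eval (mk r) = mk (f.eval r) := by
    intro r
    rw [hg, Polynomial.eval_map, Polynomial.eval₂_at_apply]
  -- the range of eval of g is finite
  have hfing : (Set.range fun x : R ⧸ P => g.eval x).Finite := by
    have hsub : (Set.range fun x : R ⧸ P => g.eval x) ⊆
        mk '' (Set.range fun r => f.eval r) := by
      rintro _ ⟨x, rfl⟩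
      obtain ⟨r, rfl⟩ := Ideal.Quotient.mk_surjective x
      exact ⟨f.eval r, ⟨r, rfl⟩, (hgeval r).symm⟩
    exact (hfin.image mk).subset hsub
  have : Finite (Set.range fun x : R ⧸ P => g.eval x) := hfing
  obtain ⟨c, hc⟩ := Finite.exists_infinite_fiber
    (fun x : R ⧸ P => (⟨g.eval x, Set.mem_range_self x⟩ :
      (Set.range fun x : R ⧸ P => g.eval x)))
  -- the fiber is the root set of g - C c
  have hroots : {x : R ⧸ P | (g - Polynomial.C (c : R ⧸ P)).IsRoot x}.Infinite := by
    apply Set.Infinite.mono _ (Set.infinite_coe_iff.mp hc)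
    intro x hx
    simp only [Set.mem_preimage, Set.mem_singleton_iff] at hx
    have : g.eval x = (c : R ⧸ P) := congrArg Subtype.val hx
    simp [Polynomial.IsRoot, this]
  have hzero : g - Polynomial.C (c : R ⧸ P) = 0 := by
    by_contra h0
    exact hroots (Polynomial.finite_setOf_isRoot h0)
  have hgc : g = Polynomial.C (c : R ⧸ P) := by
    linear_combination (norm := ring_nf) hzero
  -- hence f.eval a - f.eval b ∈ P for all a b
  have hconst : ∀ a b : R, f.eval a - f.eval b ∈ P := by
    intro a b
    have ha := hgeval a
    have hb := hgeval b
    rw [hgc, Polynomial.eval_C] at ha hb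
    have h2 : mk (f.eval a - f.eval b) = 0 := by
      rw [map_sub, ← ha, ← hb, sub_self]
    exact (Ideal.Quotient.eq_zero_iff_mem).mp h2
  obtain ⟨𝔪, h𝔪, hP𝔪⟩ := P.exists_le_maximal hP.ne_top
  obtain ⟨a, b, hab⟩ := hnc 𝔪 h𝔪
  exact hab (hP𝔪 (hconst a b))

theorem stmt_8 {R : Type*} [CommRing R] [Nontrivial R] (f : Polynomial R)
    (hfin : (Set.range fun r => f.eval r).Finite)
    (hnc : ∀ 𝔪 : Ideal R, 𝔪.IsMaximal → ∃ a b : R, f.eval a - f.eval b ∉ 𝔪) :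
    (∀ P : Ideal R, P.IsPrime → P.IsMaximal) ∧
    (∀ P : Ideal R, P.IsPrime → Finite (R ⧸ P)) := by
  have hfinQ := aux_finite f hfin hnc
  refine ⟨fun P hP => ?_, hfinQ⟩
  have : Finite (R ⧸ P) := hfinQ P hP
  have : IsDomain (R ⧸ P) := Ideal.Quotient.isDomain P
  exact Ideal.Quotient.maximal_of_isField P (Finite.isField_of_domain _)
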